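/- A linear map u : H_4 → H_4 is a unitary coalgebra map (a coalgebra morphism with u(1) = 1) if and only if either u is the trivial morphism u(h) = ε(h)1 for all h ∈ H_4, or there exist scalars α, β, γ, δ ∈ k such that u(1) = 1, u(g) = g, u(x) = α - αg + βx, and u(gx) = γ - γg + δgx. -/

import Mathlib

open TensorProduct

noncomputable section

/-- A linear map between coalgebras is a coalgebra morphism if it commutes with
counits and comultiplications. -/
def IsCoalgebraMap (k : Type*) [CommRing k] {A B : Type*} [AddCommGroup A] [Module k A]
    [Coalgebra k A] [AddCommGroup B] [Module k B] [Coalgebra k B] (u : A →ₗ[k] B) : Prop :=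
  Coalgebra.counit (R := k) ∘ₗ u = Coalgebra.counit (R := k) ∧
    Coalgebra.comul (R := k) ∘ₗ u = TensorProduct.map u u ∘ₗ Coalgebra.comul (R := k)

/-- `H` is (a model of) Sweedler's 4-dimensional Hopf algebra `H₄` with generators `g`, `x`:
`g² = 1`, `x² = 0`, `xg = -gx`, the family `{1, g, x, gx}` is a basis of `H`, `g` is
group-like, `x` is `(1, g)`-primitive, and `S(g) = g`, `S(x) = -gx`. -/
structure IsSweedler (k : Type*) [CommRing k] (H : Type*) [Ring H] [HopfAlgebra k H]
    (g x : H) : Prop where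
  g_sq : g * g = 1
  x_sq : x * x = 0
  x_mul_g : x * g = -(g * x)
  li : LinearIndependent k ![(1 : H), g, x, g * x]
  span : Submodule.span k {(1 : H), g, x, g * x} = ⊤
  comul_g : Coalgebra.comul (R := k) g = g ⊗ₜ[k] g
  comul_x : Coalgebra.comul (R := k) x = x ⊗ₜ[k] (1 : H) + g ⊗ₜ[k] x
  counit_g : Coalgebra.counit (R := k) g = 1
  counit_x : Coalgebra.counit (R := k) x = 0
  antipode_g : HopfAlgebra.antipode (R := k) g = g
  antipode_x : HopfAlgebra.antipode (R := k) x = -(g * x)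

namespace SweedlerAux

variable {k : Type*} [Field k] {H : Type*} [Ring H] [HopfAlgebra k H] {g x : H}

def bas (hs : IsSweedler k H g x) : Module.Basis (Fin 4) k H :=
  Module.Basis.mk hs.li (by
    have : Set.range ![(1 : H), g, x, g * x] = {(1 : H), g, x, g * x} := by
      ext y; simp [Matrix.range_cons, Matrix.range_empty]; tauto
    rw [this, hs.span])

lemma bas0 (hs : IsSweedler k H g x) : bas hs 0 = 1 := by simp [bas]
lemma bas1 (hs : IsSweedler k H g x) : bas hs 1 = g := by simp [bas]
lemma bas2 (hs : IsSweedler k H g x) : bas hs 2 = x := by simp [bas]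
lemma bas3 (hs : IsSweedler k H g x) : bas hs 3 = g * x := by simp [bas]

lemma repr_one (hs : IsSweedler k H g x) : (bas hs).repr 1 = Finsupp.single 0 1 := by
  have h := (bas hs).repr_self (0 : Fin 4)
  rwa [bas0 hs] at h

lemma repr_g (hs : IsSweedler k H g x) : (bas hs).repr g = Finsupp.single 1 1 := by
  have h := (bas hs).repr_self (1 : Fin 4)
  rwa [bas1 hs] at h

lemma repr_x (hs : IsSweedler k H g x) : (bas hs).repr x = Finsupp.single 2 1 := by
  have h := (bas hs).repr_self (2 : Fin 4)
  rwa [bas2 hs] at h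

lemma repr_gx (hs : IsSweedler k H g x) : (bas hs).repr (g * x) = Finsupp.single 3 1 := by
  have h := (bas hs).repr_self (3 : Fin 4)
  rwa [bas3 hs] at h

lemma expand (hs : IsSweedler k H g x) (w : H) :
    w = (bas hs).repr w 0 • 1 + (bas hs).repr w 1 • g + (bas hs).repr w 2 • x
      + (bas hs).repr w 3 • (g * x) := by
  have := (bas hs).sum_repr w
  rw [Fin.sum_univ_four, bas0, bas1, bas2, bas3] at this
  linear_combination (norm := module) this.symm

lemma comul_one' (hs : IsSweedler k H g x) :
    Coalgebra.comul (R := k) (1 : H) = (1 : H) ⊗ₜ[k] 1 := by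
  rw [Bialgebra.comul_one, Algebra.TensorProduct.one_def]

lemma comul_gx (hs : IsSweedler k H g x) :
    Coalgebra.comul (R := k) (g * x) = (g * x) ⊗ₜ[k] g + (1 : H) ⊗ₜ[k] (g * x) := by
  rw [Bialgebra.comul_mul, hs.comul_g, hs.comul_x, mul_add,
    Algebra.TensorProduct.tmul_mul_tmul, Algebra.TensorProduct.tmul_mul_tmul,
    mul_one, hs.g_sq]

lemma counit_one' (hs : IsSweedler k H g x) :
    Coalgebra.counit (R := k) (1 : H) = 1 := Bialgebra.counit_one

lemma counit_gx (hs : IsSweedler k H g x) :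
    Coalgebra.counit (R := k) (g * x) = 0 := by
  rw [Bialgebra.counit_mul, hs.counit_x, mul_zero]


lemma Trepr_comul (hs : IsSweedler k H g x) (w : H) (i j : Fin 4) :
    ((bas hs).tensorProduct (bas hs)).repr (Coalgebra.comul (R := k) w) (i, j) =
      (bas hs).repr w 0 * ((if (0:Fin 4) = i then (1:k) else 0) * (if (0:Fin 4) = j then (1:k) else 0))
    + (bas hs).repr w 1 * ((if (1:Fin 4) = i then (1:k) else 0) * (if (1:Fin 4) = j then (1:k) else 0))
    + (bas hs).repr w 2 * ((if (2:Fin 4) = i then (1:k) else 0) * (if (0:Fin 4) = j then (1:k) else 0)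
        + (if (1:Fin 4) = i then (1:k) else 0) * (if (2:Fin 4) = j then (1:k) else 0))
    + (bas hs).repr w 3 * ((if (3:Fin 4) = i then (1:k) else 0) * (if (1:Fin 4) = j then (1:k) else 0)
        + (if (0:Fin 4) = i then (1:k) else 0) * (if (3:Fin 4) = j then (1:k) else 0)) := by
  conv_lhs => rw [expand hs w]
  simp only [map_add, map_smul, comul_one' hs, hs.comul_g, hs.comul_x, comul_gx hs,
    Finsupp.add_apply, Finsupp.smul_apply, Module.Basis.tensorProduct_repr_tmul_apply,
    repr_one hs, repr_g hs, repr_x hs, repr_gx hs, Finsupp.single_apply, smul_eq_mul]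
  ring

lemma Trepr_tmul (hs : IsSweedler k H g x) (w w' : H) (i j : Fin 4) :
    ((bas hs).tensorProduct (bas hs)).repr (w ⊗ₜ[k] w') (i, j) =
      (bas hs).repr w i * (bas hs).repr w' j :=
  by rw [Module.Basis.tensorProduct_repr_tmul_apply, smul_eq_mul, mul_comm]

lemma counit_expand (hs : IsSweedler k H g x) (w : H) :
    Coalgebra.counit (R := k) w = (bas hs).repr w 0 + (bas hs).repr w 1 := by
  conv_lhs => rw [expand hs w]
  simp [map_add, map_smul, counit_one' hs, hs.counit_g, hs.counit_x, counit_gx hs]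

theorem main
    {k : Type*} [Field k] (hchar : (2 : k) ≠ 0) {H : Type*} [Ring H] [HopfAlgebra k H]
    {g x : H} (hs : IsSweedler k H g x) (u : H →ₗ[k] H) :
    ((Coalgebra.counit (R := k) ∘ₗ u = Coalgebra.counit (R := k) ∧
    Coalgebra.comul (R := k) ∘ₗ u = TensorProduct.map u u ∘ₗ Coalgebra.comul (R := k)) ∧ u 1 = 1) ↔
      ((∀ h : H, u h = Coalgebra.counit (R := k) h • (1 : H)) ∨
        ∃ α β γ δ : k, u 1 = 1 ∧ u g = g ∧
          u x = α • (1 : H) - α • g + β • x ∧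
          u (g * x) = γ • (1 : H) - γ • g + δ • (g * x)) := by
  constructor
  · rintro ⟨⟨hcu, hcm⟩, h1⟩
    have hcm' : ∀ h : H, Coalgebra.comul (R := k) (u h)
        = TensorProduct.map u u (Coalgebra.comul (R := k) h) := fun h => by
      simpa only [LinearMap.comp_apply] using LinearMap.congr_fun hcm h
    have hcu' : ∀ h : H, Coalgebra.counit (R := k) (u h) = Coalgebra.counit (R := k) h :=
      fun h => by simpa only [LinearMap.comp_apply] using LinearMap.congr_fun hcu h
    have hg : Coalgebra.comul (R := k) (u g) = u g ⊗ₜ[k] u g := by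
      rw [hcm' g, hs.comul_g, TensorProduct.map_tmul]
    have e01 : (bas hs).repr (u g) 0 * (bas hs).repr (u g) 1 = 0 := by
      have h := Trepr_comul hs (u g) 0 1
      rw [hg, Trepr_tmul hs] at h
      simpa using h
    have e22 : (bas hs).repr (u g) 2 = 0 := by
      have h := Trepr_comul hs (u g) 2 2
      rw [hg, Trepr_tmul hs] at h
      simpa using h
    have e33 : (bas hs).repr (u g) 3 = 0 := by
      have h := Trepr_comul hs (u g) 3 3
      rw [hg, Trepr_tmul hs] at h
      simpa using h
    have ec : (bas hs).repr (u g) 0 + (bas hs).repr (u g) 1 = 1 := by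
      have h := hcu' g
      rw [counit_expand hs (u g), hs.counit_g] at h
      exact h
    rcases mul_eq_zero.1 e01 with h0 | h0
    · -- u g = g : nontrivial case
      right
      have hr1 : (bas hs).repr (u g) 1 = 1 := by linear_combination ec - h0
      have hug : u g = g := by
        have h := expand hs (u g)
        rw [h0, e22, e33, hr1] at h
        simpa using h
      -- u x
      have hx : Coalgebra.comul (R := k) (u x) = u x ⊗ₜ[k] (1 : H) + g ⊗ₜ[k] u x := by
        rw [hcm' x, hs.comul_x, map_add, TensorProduct.map_tmul, TensorProduct.map_tmul, h1, hug]
      have f10 : (bas hs).repr (u x) 1 = -(bas hs).repr (u x) 0 := by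
        have h := Trepr_comul hs (u x) 1 0
        rw [hx] at h
        simp [map_add, Finsupp.add_apply, Trepr_tmul hs, repr_one hs, repr_g hs,
          Finsupp.single_apply] at h
        linear_combination h
      have f30 : (bas hs).repr (u x) 3 = 0 := by
        have h := Trepr_comul hs (u x) 3 0
        rw [hx] at h
        simp [map_add, Finsupp.add_apply, Trepr_tmul hs, repr_one hs, repr_g hs,
          Finsupp.single_apply] at h
        exact h
      have hux : u x = (bas hs).repr (u x) 0 • (1 : H) - (bas hs).repr (u x) 0 • g
          + (bas hs).repr (u x) 2 • x := by
        have h := expand hs (u x)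
        rw [f10, f30] at h
        conv_lhs => rw [h]
        module
      -- u (g x)
      have hgx : Coalgebra.comul (R := k) (u (g * x))
          = u (g * x) ⊗ₜ[k] g + (1 : H) ⊗ₜ[k] u (g * x) := by
        rw [hcm' (g * x), comul_gx hs, map_add, TensorProduct.map_tmul, TensorProduct.map_tmul,
          h1, hug]
      have q01 : (bas hs).repr (u (g * x)) 1 = -(bas hs).repr (u (g * x)) 0 := by
        have h := Trepr_comul hs (u (g * x)) 0 1
        rw [hgx] at h
        simp [map_add, Finsupp.add_apply, Trepr_tmul hs, repr_one hs, repr_g hs,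
          Finsupp.single_apply] at h
        linear_combination h
      have q20 : (bas hs).repr (u (g * x)) 2 = 0 := by
        have h := Trepr_comul hs (u (g * x)) 2 0
        rw [hgx] at h
        simp [map_add, Finsupp.add_apply, Trepr_tmul hs, repr_one hs, repr_g hs,
          Finsupp.single_apply] at h
        linear_combination -h
      have hugx : u (g * x) = (bas hs).repr (u (g * x)) 0 • (1 : H)
          - (bas hs).repr (u (g * x)) 0 • g + (bas hs).repr (u (g * x)) 3 • (g * x) := by
        have h := expand hs (u (g * x))
        rw [q01, q20] at h
        conv_lhs => rw [h]
        module
      exact ⟨_, _, _, _, h1, hug, hux, hugx⟩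
    · -- u g = 1 : trivial case
      left
      have hr0 : (bas hs).repr (u g) 0 = 1 := by linear_combination ec - h0
      have hug : u g = 1 := by
        have h := expand hs (u g)
        rw [h0, e22, e33, hr0] at h
        simpa using h
      have zero_of : ∀ w : H,
          Coalgebra.comul (R := k) (u w) = u w ⊗ₜ[k] (1 : H) + (1 : H) ⊗ₜ[k] u w → u w = 0 := by
        intro w hw
        have f00 : (bas hs).repr (u w) 0 = 0 := by
          have h := Trepr_comul hs (u w) 0 0
          rw [hw] at h
          simp [map_add, Finsupp.add_apply, Trepr_tmul hs, repr_one hs,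
            Finsupp.single_apply] at h
          linear_combination h
        have f11 : (bas hs).repr (u w) 1 = 0 := by
          have h := Trepr_comul hs (u w) 1 1
          rw [hw] at h
          simp [map_add, Finsupp.add_apply, Trepr_tmul hs, repr_one hs,
            Finsupp.single_apply] at h
          linear_combination -h
        have f12 : (bas hs).repr (u w) 2 = 0 := by
          have h := Trepr_comul hs (u w) 1 2
          rw [hw] at h
          simp [map_add, Finsupp.add_apply, Trepr_tmul hs, repr_one hs,
            Finsupp.single_apply] at h
          linear_combination -h
        have f31 : (bas hs).repr (u w) 3 = 0 := by
          have h := Trepr_comul hs (u w) 3 1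
          rw [hw] at h
          simp [map_add, Finsupp.add_apply, Trepr_tmul hs, repr_one hs,
            Finsupp.single_apply] at h
          linear_combination -h
        have h := expand hs (u w)
        rw [f00, f11, f12, f31] at h
        simpa using h
      have hux : u x = 0 := by
        apply zero_of
        rw [hcm' x, hs.comul_x, map_add, TensorProduct.map_tmul, TensorProduct.map_tmul, h1, hug]
      have hugx : u (g * x) = 0 := by
        apply zero_of
        rw [hcm' (g * x), comul_gx hs, map_add, TensorProduct.map_tmul, TensorProduct.map_tmul,
          h1, hug]
      have huniv : u = (LinearMap.toSpanSingleton k H 1) ∘ₗ (Coalgebra.counit (R := k)) := by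
        apply LinearMap.ext_on hs.span
        intro w hw
        simp only [Set.mem_insert_iff, Set.mem_singleton_iff] at hw
        rcases hw with rfl | rfl | rfl | rfl <;>
          simp [h1, hug, hux, hugx, counit_one' hs, hs.counit_g, hs.counit_x, counit_gx hs]
      intro h
      rw [huniv]
      simp [LinearMap.toSpanSingleton_apply]
  · rintro (htr | ⟨α, β, γ, δ, h1, hug, hux, hugx⟩)
    · have hu1 : u 1 = 1 := by rw [htr 1, counit_one' hs, one_smul]
      have hug : u g = 1 := by rw [htr g, hs.counit_g, one_smul]
      have hux : u x = 0 := by rw [htr x, hs.counit_x, zero_smul]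
      have hugx : u (g * x) = 0 := by rw [htr (g * x), counit_gx hs, zero_smul]
      refine ⟨⟨?_, ?_⟩, hu1⟩
      · apply LinearMap.ext_on hs.span
        intro w hw
        simp only [Set.mem_insert_iff, Set.mem_singleton_iff] at hw
        rcases hw with rfl | rfl | rfl | rfl <;>
          simp [hu1, hug, hux, hugx, counit_one' hs, hs.counit_g, hs.counit_x, counit_gx hs]
      · apply LinearMap.ext_on hs.span
        intro w hw
        simp only [Set.mem_insert_iff, Set.mem_singleton_iff] at hw
        rcases hw with rfl | rfl | rfl | rfl <;>
          simp [hu1, hug, hux, hugx, comul_one' hs, hs.comul_g, hs.comul_x, comul_gx hs,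
            TensorProduct.map_tmul, TensorProduct.tmul_zero, TensorProduct.zero_tmul]
    · refine ⟨⟨?_, ?_⟩, h1⟩
      · apply LinearMap.ext_on hs.span
        intro w hw
        simp only [Set.mem_insert_iff, Set.mem_singleton_iff] at hw
        rcases hw with rfl | rfl | rfl | rfl <;>
          simp [h1, hug, hux, hugx, counit_one' hs, hs.counit_g, hs.counit_x, counit_gx hs]
      · apply LinearMap.ext_on hs.span
        intro w hw
        simp only [Set.mem_insert_iff, Set.mem_singleton_iff] at hw
        rcases hw with rfl | rfl | rfl | rfl
        · simp only [LinearMap.comp_apply, h1, comul_one' hs, TensorProduct.map_tmul]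
        · simp only [LinearMap.comp_apply, hug, hs.comul_g, TensorProduct.map_tmul]
        · simp only [LinearMap.comp_apply, hux, hs.comul_x, map_add, map_sub, map_smul,
            comul_one' hs, hs.comul_g, TensorProduct.map_tmul, h1, hug]
          simp only [TensorProduct.add_tmul, TensorProduct.sub_tmul, TensorProduct.tmul_add,
            TensorProduct.tmul_sub, ← TensorProduct.smul_tmul', TensorProduct.tmul_smul,
            smul_add, smul_sub]
          module
        · simp only [LinearMap.comp_apply, hugx, comul_gx hs, map_add, map_sub, map_smul,
            comul_one' hs, hs.comul_g, TensorProduct.map_tmul, h1, hug]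
          simp only [TensorProduct.add_tmul, TensorProduct.sub_tmul, TensorProduct.tmul_add,
            TensorProduct.tmul_sub, ← TensorProduct.smul_tmul', TensorProduct.tmul_smul,
            smul_add, smul_sub]
          module

end SweedlerAux

/-- A linear map `u : H₄ → H₄` is a unitary coalgebra map (a coalgebra morphism with
`u(1) = 1`) if and only if either `u` is the trivial morphism `u(h) = ε(h)1`, or there
exist scalars `α, β, γ, δ ∈ k` such that `u(1) = 1`, `u(g) = g`, `u(x) = α - αg + βx`
and `u(gx) = γ - γg + δgx`. -/


theorem sweedler_unitary_coalgebra_maps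
    {k : Type*} [Field k] (hchar : (2 : k) ≠ 0) {H : Type*} [Ring H] [HopfAlgebra k H]
    {g x : H} (hs : IsSweedler k H g x) (u : H →ₗ[k] H) :
    (IsCoalgebraMap k u ∧ u 1 = 1) ↔
      ((∀ h : H, u h = Coalgebra.counit (R := k) h • (1 : H)) ∨
        ∃ α β γ δ : k, u 1 = 1 ∧ u g = g ∧
          u x = α • (1 : H) - α • g + β • x ∧
          u (g * x) = γ • (1 : H) - γ • g + δ • (g * x)) :=
  SweedlerAux.main hchar hs u

end
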